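/- arXiv:2604.23142 — 3 statements merged into one kernel-verified Lean document; each statement's English description precedes it below -/
import Mathlib

section
/- (Swapping Lemma, scalar version) Let λ > 0 and let F be the filter λ/(p+λ) with zero initial condition, i.e., F[u] solves y' = -λ y + λ u, y(0) = 0. Then for any continuous signal w : ℝ≥0 → ℝ and any continuously differentiable signal v : ℝ≥0 → ℝ, the identity F[w·v](t) = F[w](t)·v(t) - F[(1/λ)·F[w]·v'](t) holds for all t ≥ 0. -/
open Real

/-- Swapping Lemma (scalar version): with `F` the filter `λ/(p+λ)` with zero initial
condition, `F[w·v](t) = F[w](t)·v(t) - F[(1/λ)·F[w]·v'](t)` for all `t ≥ 0`. -/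
theorem stmt1 (lam : ℝ) (hlam : 0 < lam)
    (w v dv : ℝ → ℝ) (hw : Continuous w)
    (hv : ∀ t, HasDerivAt v (dv t) t) (hdv : Continuous dv)
    (Fw Fwv G : ℝ → ℝ)
    (hFw0 : Fw 0 = 0) (hFw : ∀ t, HasDerivAt Fw (-lam * Fw t + lam * w t) t)
    (hFwv0 : Fwv 0 = 0)
    (hFwv : ∀ t, HasDerivAt Fwv (-lam * Fwv t + lam * (w t * v t)) t)
    (hG0 : G 0 = 0)
    (hG : ∀ t, HasDerivAt G (-lam * G t + lam * ((1 / lam) * Fw t * dv t)) t) :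
    ∀ t ≥ (0 : ℝ), Fwv t = Fw t * v t - G t := by
  set D : ℝ → ℝ := fun t => Fwv t - (Fw t * v t - G t) with hD
  have hD0 : D 0 = 0 := by simp [hD, hFwv0, hFw0, hG0]
  have hDder : ∀ t, HasDerivAt D (-lam * D t) t := by
    intro t
    have h1 : HasDerivAt (fun t => Fw t * v t)
        ((-lam * Fw t + lam * w t) * v t + Fw t * dv t) t := (hFw t).mul (hv t)
    have := ((hFwv t).sub (h1.sub (hG t)))
    refine this.congr_deriv ?_
    simp only [hD]
    rw [show lam * ((1 / lam) * Fw t * dv t) = Fw t * dv t by field_simp]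
    ring
  set E : ℝ → ℝ := fun t => Real.exp (lam * t) * D t with hE
  have hEder : ∀ t, HasDerivAt E 0 t := by
    intro t
    have he : HasDerivAt (fun t => Real.exp (lam * t)) (lam * Real.exp (lam * t)) t := by
      simpa [mul_comm, Function.comp_def] using (Real.hasDerivAt_exp (lam * t)).comp t
        ((hasDerivAt_id t).const_mul lam)
    have := he.mul (hDder t)
    refine this.congr_deriv ?_
    ring
  have hconst : ∀ t, E t = E 0 :=
    fun t => is_const_of_deriv_eq_zero (fun x => (hEder x).differentiableAt)
      (fun x => (hEder x).deriv) t 0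
  intro t _
  have := hconst t
  simp only [hE, hD0, mul_zero] at this
  have hexp : Real.exp (lam * t) ≠ 0 := (Real.exp_pos _).ne'
  have hDt : D t = 0 := by
    exact (mul_eq_zero.mp this).resolve_left hexp
  simpa [hD, sub_eq_zero] using hDt
end

section
/- Consider the double integrator x₁' = x₂, x₂' = u with output y = x₁, where u : ℝ≥0 → ℝ is continuous. Let λ > 0 and let F be the filter λ/(p+λ) with zero initial condition. Then for all t ≥ 0, x₂(t) = λ·(y(t) − F[y](t)) + (1/λ)·F[u](t) + (x₂(0) − λ·x₁(0))·e^{-λt}. In particular x₂(t) − (p F[y](t) + (1/λ)F[u](t)) → 0 exponentially as t → ∞, where p F[y] := λ(y − F[y]). -/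
open Real

/-- ASLO for the double integrator: for all `t ≥ 0`,
`x₂(t) = λ(y(t) − F[y](t)) + (1/λ)F[u](t) + (x₂(0) − λx₁(0))e^{-λt}`;
in particular the ASLO estimate `pF[y] + (1/λ)F[u]` converges to `x₂` exponentially. -/
theorem stmt2 (lam : ℝ) (hlam : 0 < lam)
    (u x1 x2 y Fy Fu : ℝ → ℝ) (hu : Continuous u)
    (hx1 : ∀ t, HasDerivAt x1 (x2 t) t)
    (hx2 : ∀ t, HasDerivAt x2 (u t) t)
    (hy : ∀ t, y t = x1 t)
    (hFy0 : Fy 0 = 0) (hFy : ∀ t, HasDerivAt Fy (-lam * Fy t + lam * y t) t)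
    (hFu0 : Fu 0 = 0) (hFu : ∀ t, HasDerivAt Fu (-lam * Fu t + lam * u t) t) :
    (∀ t ≥ (0 : ℝ),
      x2 t = lam * (y t - Fy t) + (1 / lam) * Fu t
        + (x2 0 - lam * x1 0) * Real.exp (-lam * t))
    ∧ Filter.Tendsto
        (fun t => x2 t - (lam * (y t - Fy t) + (1 / lam) * Fu t))
        Filter.atTop (nhds 0) := by
  have hyx : y = x1 := funext hy
  subst hyx
  have hlam' : lam ≠ 0 := ne_of_gt hlam
  set h : ℝ → ℝ := fun t =>
    (x2 t - lam * (y t - Fy t) - (1 / lam) * Fu t) * Real.exp (lam * t) with hh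
  have hderiv : ∀ t, HasDerivAt h 0 t := by
    intro t
    have hexp : HasDerivAt (fun t : ℝ => Real.exp (lam * t))
        (Real.exp (lam * t) * lam) t := by
      simpa using ((hasDerivAt_id t).const_mul lam).exp
    have hg : HasDerivAt (fun t => x2 t - lam * (y t - Fy t) - (1 / lam) * Fu t)
        (u t - lam * (x2 t - (-lam * Fy t + lam * y t)) - (1 / lam) * (-lam * Fu t + lam * u t)) t :=
      ((hx2 t).sub (((hx1 t).sub (hFy t)).const_mul lam)).sub ((hFu t).const_mul (1 / lam))
    have := hg.mul hexp
    refine this.congr_deriv ?_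
    have hk : (1 / lam) * lam = 1 := by field_simp
    linear_combination (-(u t * Real.exp (lam * t))) * hk
  have hconst : ∀ t, h t = h 0 := by
    intro t
    have hdiff : Differentiable ℝ h := fun t => (hderiv t).differentiableAt
    have h0 : ∀ x, deriv h x = 0 := fun x => (hderiv x).deriv
    exact is_const_of_deriv_eq_zero hdiff h0 t 0
  have key : ∀ t, x2 t - lam * (y t - Fy t) - (1 / lam) * Fu t
      = (x2 0 - lam * y 0) * Real.exp (-lam * t) := by
    intro t
    have := hconst t
    simp only [hh, hFy0, hFu0, mul_zero, Real.exp_zero, mul_one, sub_zero] at this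
    have hne : Real.exp (lam * t) ≠ 0 := Real.exp_ne_zero _
    have : x2 t - lam * (y t - Fy t) - (1 / lam) * Fu t
        = (x2 0 - lam * y 0) / Real.exp (lam * t) := by
      field_simp at this ⊢
      linarith [this]
    rw [this, neg_mul, Real.exp_neg, div_eq_mul_inv]
  constructor
  · intro t _
    have := key t
    linarith [this]
  · have : (fun t => x2 t - (lam * (y t - Fy t) + (1 / lam) * Fu t))
        = fun t => (x2 0 - lam * y 0) * Real.exp (-lam * t) := by
      funext t
      have := key t
      linarith [this]
    rw [this]
    have : Filter.Tendsto (fun t : ℝ => Real.exp (-lam * t)) Filter.atTop (nhds 0) := by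
      have hmul : Filter.Tendsto (fun t : ℝ => lam * t) Filter.atTop Filter.atTop :=
        Filter.Tendsto.const_mul_atTop hlam Filter.tendsto_id
      have hmb : Filter.Tendsto (fun t : ℝ => -lam * t) Filter.atTop Filter.atBot := by
        simpa [neg_mul] using Filter.tendsto_neg_atBot_iff.mpr hmul
      exact Real.tendsto_exp_atBot.comp hmb
    have h2 := this.const_mul (x2 0 - lam * y 0)
    simpa using h2
end

section
/- Let λ > 0 and let d' be constant (d(t) = δ for all t, δ ∈ ℝ). With F the filter λ/(p+λ) with zero initial condition and p F[w] := λ(w − F[w]) its derivative output, the perturbed output y = x₁ + δ of the double integrator x₁' = x₂, x₂' = u satisfies p F[y](t) = p F[x₁](t) + λ δ e^{-λ t} for all t ≥ 0. Consequently, the ASLO estimate p F[y] + (1/λ)F[u] differs from the unperturbed one by a term converging to zero exponentially, i.e., the ASLO is asymptotically insensitive to constant output disturbances. -/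
open Real

/-- Robustness to constant output disturbances (Observation O4): with
`y = x₁ + δ`, the derivative output satisfies
`pF[y](t) = pF[x₁](t) + λ δ e^{-λt}`, hence the ASLO estimate differs from the
unperturbed one by an exponentially vanishing term. -/
theorem stmt4 (lam delta : ℝ) (hlam : 0 < lam)
    (u x1 x2 y Fy Fx1 Fu : ℝ → ℝ)
    (hx1 : ∀ t, HasDerivAt x1 (x2 t) t)
    (hx2 : ∀ t, HasDerivAt x2 (u t) t)
    (hy : ∀ t, y t = x1 t + delta)
    (hFy0 : Fy 0 = 0) (hFy : ∀ t, HasDerivAt Fy (-lam * Fy t + lam * y t) t)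
    (hFx10 : Fx1 0 = 0)
    (hFx1 : ∀ t, HasDerivAt Fx1 (-lam * Fx1 t + lam * x1 t) t)
    (hFu0 : Fu 0 = 0) (hFu : ∀ t, HasDerivAt Fu (-lam * Fu t + lam * u t) t) :
    (∀ t ≥ (0 : ℝ),
      lam * (y t - Fy t) = lam * (x1 t - Fx1 t) + lam * delta * Real.exp (-lam * t))
    ∧ Filter.Tendsto
        (fun t => (lam * (y t - Fy t) + (1 / lam) * Fu t)
          - (lam * (x1 t - Fx1 t) + (1 / lam) * Fu t))
        Filter.atTop (nhds 0) := by
  set h : ℝ → ℝ := fun t => (Fy t - Fx1 t - delta) * Real.exp (lam * t) + delta with hh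
  have hder : ∀ t, HasDerivAt h 0 t := by
    intro t
    have he : HasDerivAt (fun t => Real.exp (lam * t)) (lam * Real.exp (lam * t)) t := by
      simpa [mul_comm] using ((hasDerivAt_id' t).const_mul lam).exp
    have h1 : HasDerivAt (fun t => Fy t - Fx1 t - delta)
        ((-lam * Fy t + lam * y t) - (-lam * Fx1 t + lam * x1 t)) t :=
      ((hFy t).sub (hFx1 t)).sub_const delta
    have := (h1.mul he).add_const delta
    refine this.congr_deriv ?_
    rw [hy t]; ring
  have hconst : ∀ t, h t = h 0 := by
    intro t
    exact is_const_of_deriv_eq_zero (fun s => (hder s).differentiableAt)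
      (fun s => (hder s).deriv) t 0
  have h0 : h 0 = 0 := by simp [hh, hFy0, hFx10]
  have key : ∀ t, Fy t = Fx1 t + delta - delta * Real.exp (-lam * t) := by
    intro t
    have heq : (Fy t - Fx1 t - delta) * Real.exp (lam * t) + delta = 0 :=
      (hconst t).trans h0
    have hne : Real.exp (lam * t) ≠ 0 := (Real.exp_pos _).ne'
    rw [neg_mul, Real.exp_neg]
    field_simp
    nlinarith [heq]
  have main : ∀ t, lam * (y t - Fy t) = lam * (x1 t - Fx1 t)
      + lam * delta * Real.exp (-lam * t) := by
    intro t
    rw [hy t, key t]; ring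
  refine ⟨fun t _ => main t, ?_⟩
  have : (fun t => (lam * (y t - Fy t) + (1 / lam) * Fu t)
          - (lam * (x1 t - Fx1 t) + (1 / lam) * Fu t))
      = fun t => lam * delta * Real.exp (-lam * t) := by
    funext t; rw [main t]; ring
  rw [this]
  have h1 : Filter.Tendsto (fun t : ℝ => lam * t) Filter.atTop Filter.atTop :=
    Filter.Tendsto.const_mul_atTop hlam Filter.tendsto_id
  have h2 := Real.tendsto_exp_neg_atTop_nhds_zero.comp h1
  have h3 : (fun t : ℝ => Real.exp (-(lam * t))) = fun t => Real.exp (-lam * t) := by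
    funext t; ring_nf
  rw [Function.comp_def, h3] at h2
  simpa using h2.const_mul (lam * delta)
end
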